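/- Let k be a field, m ≥ 1 an integer, and a a unit of k⟦x,y⟧. Then the k-algebra homomorphism from the one-variable power series ring k⟦t⟧ to the quotient ring k⟦x,y⟧/(y^m + a·x) that sends t to the residue class of y is bijective. In particular, k⟦x,y⟧/(y^m + a·x) is an integral domain and the ideal generated by y^m + a·x is prime. -/

import Mathlib

open MvPowerSeries Finsupp

namespace Stmt4Aux

variable {k : Type*} [Field k]

noncomputable def fd (i n : ℕ) : Fin 2 →₀ ℕ := Finsupp.single 0 i + Finsupp.single 1 n

@[simp] lemma fd_apply0 (i n : ℕ) : fd i n 0 = i := by simp [fd]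
@[simp] lemma fd_apply1 (i n : ℕ) : fd i n 1 = n := by simp [fd]

lemma fd_eta (d : Fin 2 →₀ ℕ) : fd (d 0) (d 1) = d := by
  ext t
  fin_cases t <;> simp

lemma eq_zero_iff (d : Fin 2 →₀ ℕ) : d = 0 ↔ d 0 = 0 ∧ d 1 = 0 := by
  constructor
  · rintro rfl; simp
  · rintro ⟨h0, h1⟩
    rw [← fd_eta d, h0, h1]
    ext t; fin_cases t <;> simp

def wt (m : ℕ) (d : Fin 2 →₀ ℕ) : ℕ := m * d 0 + d 1

lemma wt_add (m : ℕ) (u v : Fin 2 →₀ ℕ) : wt m (u + v) = wt m u + wt m v := by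
  simp [wt]; ring

lemma wt_pos (m : ℕ) (hm : 0 < m) {v : Fin 2 →₀ ℕ} (hv : v ≠ 0) : 0 < wt m v := by
  rcases Nat.eq_zero_or_pos (wt m v) with h | h
  · exfalso
    apply hv
    have h0 : m * v 0 = 0 := Nat.eq_zero_of_add_eq_zero_right h
    have h1 : v 1 = 0 := Nat.eq_zero_of_add_eq_zero_left h
    have h0' : v 0 = 0 := by
      rcases Nat.mul_eq_zero.mp h0 with h | h
      · omega
      · exact h
    exact (eq_zero_iff v).2 ⟨h0', h1⟩
  · exact h

/-- The coefficient array of the quotient `q` in the division `g = ψ f + q·(y^m + a·x)`,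
defined by well-founded recursion on `(weight, second index)`. Here `α` is the constant
coefficient of `a` and `b = a - C α`. -/
noncomputable def qc (m : ℕ) (hm : 0 < m) (α : k) (b g : MvPowerSeries (Fin 2) k)
    (j s : ℕ) : k :=
  α⁻¹ * ((MvPowerSeries.coeff (fd (j + 1) s)) g
    - ∑ uv ∈ (Finset.HasAntidiagonal.antidiagonal (fd j s)).attach,
        (if h : uv.1.2 = 0 then 0
         else qc m hm α b g (uv.1.1 0) (uv.1.1 1) * (MvPowerSeries.coeff uv.1.2) b)
    - if h' : m ≤ s then qc m hm α b g (j + 1) (s - m) else 0)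
termination_by (m * j + s, s)
decreasing_by
  · have huv := Finset.HasAntidiagonal.mem_antidiagonal.mp uv.2
    have hu0 : uv.1.1 0 + uv.1.2 0 = j := by
      have := DFunLike.congr_fun huv 0; simpa using this
    have hu1 : uv.1.1 1 + uv.1.2 1 = s := by
      have := DFunLike.congr_fun huv 1; simpa using this
    have hwv : 0 < m * uv.1.2 0 + uv.1.2 1 := wt_pos m hm h
    apply Prod.Lex.left
    have hmj : m * (uv.1.1 0 + uv.1.2 0) = m * j := by rw [hu0]
    have := Nat.mul_add m (uv.1.1 0) (uv.1.2 0)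
    omega
  · have hms : m * (j + 1) = m * j + m := by ring
    have h2 : m * (j + 1) + (s - m) = m * j + s := by omega
    rw [h2]
    exact Prod.Lex.right _ (by omega)

lemma qc_spec (m : ℕ) (hm : 0 < m) (a g : MvPowerSeries (Fin 2) k) (α : k) (hα : α ≠ 0)
    (hca : constantCoeff a = α) (b : MvPowerSeries (Fin 2) k)
    (hb : b = a - C α) (j s : ℕ) :
    (MvPowerSeries.coeff (fd (j + 1) s)) g =
      (if m ≤ s then qc m hm α b g (j + 1) (s - m) else 0)
      + ∑ uv ∈ Finset.HasAntidiagonal.antidiagonal (fd j s),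
          qc m hm α b g (uv.1 0) (uv.1 1) * (MvPowerSeries.coeff uv.2) a := by
  have hb0 : (MvPowerSeries.coeff 0) b = 0 := by
    rw [hb, map_sub, coeff_zero_eq_constantCoeff_apply, coeff_zero_eq_constantCoeff_apply,
      constantCoeff_C, hca, sub_self]
  have ha' : a = b + C α := by rw [hb]; ring
  have hsum : ∑ uv ∈ Finset.HasAntidiagonal.antidiagonal (fd j s),
        qc m hm α b g (uv.1 0) (uv.1 1) * (MvPowerSeries.coeff uv.2) a
      = (∑ uv ∈ Finset.HasAntidiagonal.antidiagonal (fd j s),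
          qc m hm α b g (uv.1 0) (uv.1 1) * (MvPowerSeries.coeff uv.2) b)
        + α * qc m hm α b g j s := by
    conv_lhs => rw [ha']
    simp only [map_add, mul_add]
    rw [Finset.sum_add_distrib]
    congr 1
    rw [Finset.sum_eq_single_of_mem (fd j s, (0 : Fin 2 →₀ ℕ))
      (by simp [Finset.HasAntidiagonal.mem_antidiagonal])]
    · classical
      rw [MvPowerSeries.coeff_C, if_pos rfl]
      simp [mul_comm]
    · rintro ⟨u, v⟩ huv hne
      classical
      rw [Finset.HasAntidiagonal.mem_antidiagonal] at huv
      rcases eq_or_ne v 0 with rfl | hv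
      · rw [add_zero] at huv
        subst huv
        exact absurd rfl hne
      · rw [MvPowerSeries.coeff_C, if_neg hv, mul_zero]
  rw [hsum]
  have hatt : (∑ uv ∈ (Finset.HasAntidiagonal.antidiagonal (fd j s)).attach,
        (if h : uv.1.2 = 0 then 0
         else qc m hm α b g (uv.1.1 0) (uv.1.1 1) * (MvPowerSeries.coeff uv.1.2) b))
      = ∑ uv ∈ Finset.HasAntidiagonal.antidiagonal (fd j s),
          qc m hm α b g (uv.1 0) (uv.1 1) * (MvPowerSeries.coeff uv.2) b := by
    rw [← Finset.sum_attach (Finset.HasAntidiagonal.antidiagonal (fd j s))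
      (fun uv => qc m hm α b g (uv.1 0) (uv.1 1) * (MvPowerSeries.coeff uv.2) b)]
    apply Finset.sum_congr rfl
    intro x _
    by_cases hx : x.1.2 = 0
    · rw [dif_pos hx, hx, hb0, mul_zero]
    · rw [dif_neg hx]
  have hq : α * qc m hm α b g j s
      = (MvPowerSeries.coeff (fd (j + 1) s)) g
        - (∑ uv ∈ Finset.HasAntidiagonal.antidiagonal (fd j s),
            qc m hm α b g (uv.1 0) (uv.1 1) * (MvPowerSeries.coeff uv.2) b)
        - (if m ≤ s then qc m hm α b g (j + 1) (s - m) else 0) := by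
    rw [qc, ← mul_assoc, mul_inv_cancel₀ hα, one_mul, hatt]
    congr 1

  rw [hq]
  ring


lemma sub_single1 (d : Fin 2 →₀ ℕ) (m : ℕ) : d - Finsupp.single 1 m = fd (d 0) (d 1 - m) := by
  ext t
  fin_cases t <;> simp [Finsupp.tsub_apply]

lemma sub_single0 (d : Fin 2 →₀ ℕ) : d - Finsupp.single 0 1 = fd (d 0 - 1) (d 1) := by
  ext t
  fin_cases t <;> simp [Finsupp.tsub_apply]

lemma coeff_mul_p (m : ℕ) (a q : MvPowerSeries (Fin 2) k) (d : Fin 2 →₀ ℕ) :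
    (MvPowerSeries.coeff d) (q * ((X 1 : MvPowerSeries (Fin 2) k) ^ m + a * X 0)) =
      (if m ≤ d 1 then (MvPowerSeries.coeff (fd (d 0) (d 1 - m))) q else 0)
      + (if d 0 = 0 then 0
         else ∑ uv ∈ Finset.HasAntidiagonal.antidiagonal (fd (d 0 - 1) (d 1)),
           (MvPowerSeries.coeff uv.1) q * (MvPowerSeries.coeff uv.2) a) := by
  classical
  rw [mul_add, map_add, ← mul_assoc, X_pow_eq, coeff_mul_monomial, X_def, coeff_mul_monomial]
  congr 1
  · by_cases h : m ≤ d 1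
    · rw [if_pos h, if_pos (Finsupp.single_le_iff.mpr h), mul_one, sub_single1]
    · rw [if_neg h, if_neg (fun hc => h (Finsupp.single_le_iff.mp hc))]
  · by_cases h : d 0 = 0
    · rw [if_pos h, if_neg (fun hc => by
        have := Finsupp.single_le_iff.mp hc
        omega)]
    · rw [if_neg h, if_pos (Finsupp.single_le_iff.mpr (by omega)), mul_one, sub_single0,
        coeff_mul]

/-- The power series quotient in the division. -/
noncomputable def qq (m : ℕ) (hm : 0 < m) (α : k) (b g : MvPowerSeries (Fin 2) k) :
    MvPowerSeries (Fin 2) k :=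
  fun d => qc m hm α b g (d 0) (d 1)

lemma coeff_qq (m : ℕ) (hm : 0 < m) (α : k) (b g : MvPowerSeries (Fin 2) k)
    (d : Fin 2 →₀ ℕ) :
    (MvPowerSeries.coeff d) (qq m hm α b g) = qc m hm α b g (d 0) (d 1) := rfl

/-- The power series remainder (one-variable part) in the division. -/
noncomputable def ff (m : ℕ) (hm : 0 < m) (α : k) (b g : MvPowerSeries (Fin 2) k) :
    PowerSeries k :=
  PowerSeries.mk fun n =>
    (MvPowerSeries.coeff (fd 0 n)) g - if m ≤ n then qc m hm α b g 0 (n - m) else 0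

lemma division (m : ℕ) (hm : 0 < m) (a g : MvPowerSeries (Fin 2) k) (α : k) (hα : α ≠ 0)
    (hca : constantCoeff a = α) (b : MvPowerSeries (Fin 2) k)
    (hb : b = a - C α) (d : Fin 2 →₀ ℕ) :
    (MvPowerSeries.coeff d) g =
      (if d 0 = 0 then (PowerSeries.coeff (d 1)) (ff m hm α b g) else 0)
      + (MvPowerSeries.coeff d)
          (qq m hm α b g * ((X 1 : MvPowerSeries (Fin 2) k) ^ m + a * X 0)) := by
  rw [coeff_mul_p]
  by_cases h0 : d 0 = 0
  · rw [if_pos h0, if_pos h0, ff, PowerSeries.coeff_mk, coeff_qq]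
    simp only [fd_apply0, fd_apply1, h0]
    have hd : fd 0 (d 1) = d := by rw [← h0]; exact fd_eta d
    rw [hd]
    split_ifs with h <;> ring
  · rw [if_neg h0, if_neg h0, zero_add]
    obtain ⟨i, hi⟩ : ∃ i, d 0 = i + 1 := ⟨d 0 - 1, by omega⟩
    have hd : d = fd (i + 1) (d 1) := by conv_lhs => rw [← fd_eta d, hi]
    simp only [coeff_qq, fd_apply0, fd_apply1, hi, Nat.add_sub_cancel]
    have := qc_spec m hm a g α hα hca b hb i (d 1)
    rw [← hd] at this
    exact this

lemma key_inj (m : ℕ) (hm : 0 < m) (a : MvPowerSeries (Fin 2) k)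
    (hα : constantCoeff a ≠ 0) (q : MvPowerSeries (Fin 2) k)
    (h : ∀ d : Fin 2 →₀ ℕ, d 0 ≠ 0 →
      (MvPowerSeries.coeff d) (q * ((X 1 : MvPowerSeries (Fin 2) k) ^ m + a * X 0)) = 0) :
    q = 0 := by
  classical
  by_contra hq
  obtain ⟨d₀, hd₀⟩ : ∃ d, (MvPowerSeries.coeff d) q ≠ 0 := by
    by_contra hc
    push_neg at hc
    exact hq (MvPowerSeries.ext fun d => by rw [hc d, map_zero])
  have hex : ∃ w, ∃ d : Fin 2 →₀ ℕ, wt m d = w ∧ (MvPowerSeries.coeff d) q ≠ 0 :=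
    ⟨wt m d₀, d₀, rfl, hd₀⟩
  set w₀ := Nat.find hex with hw₀
  obtain ⟨d₁, hwd₁, hq₁⟩ := Nat.find_spec hex
  have hmin : ∀ d : Fin 2 →₀ ℕ, wt m d < w₀ → (MvPowerSeries.coeff d) q = 0 := by
    intro d hd
    by_contra hc
    exact Nat.find_min hex hd ⟨d, rfl, hc⟩
  set P : ℕ → Prop := fun j => m * j ≤ w₀ ∧ (MvPowerSeries.coeff (fd j (w₀ - m * j))) q ≠ 0
    with hP
  have hPd₁ : P (d₁ 0) := by
    constructor
    · have : wt m d₁ = m * d₁ 0 + d₁ 1 := rfl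
      omega
    · have h1 : w₀ - m * d₁ 0 = d₁ 1 := by
        have : wt m d₁ = m * d₁ 0 + d₁ 1 := rfl
        omega
      rw [h1, fd_eta]
      exact hq₁
  have hd₁w : d₁ 0 ≤ w₀ := by
    have h1 : d₁ 0 ≤ m * d₁ 0 := Nat.le_mul_of_pos_left _ hm
    omega
  set j₁ := Nat.findGreatest P w₀ with hj₁
  have hPj₁ : P j₁ := Nat.findGreatest_spec hd₁w hPd₁
  have hgt : ∀ jj, j₁ < jj → jj ≤ w₀ → ¬ P jj := fun jj h1 h2 =>
    Nat.findGreatest_is_greatest h1 h2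
  set n₁ := w₀ - m * j₁ with hn₁
  have hmj : m * j₁ + n₁ = w₀ := by
    have := hPj₁.1
    omega
  have hzero1 : ∀ d : Fin 2 →₀ ℕ, wt m d = w₀ → j₁ < d 0 →
      (MvPowerSeries.coeff d) q = 0 := by
    intro d hwd hjd
    by_contra hc
    have hd0w : d 0 ≤ w₀ := by
      have h1 : d 0 ≤ m * d 0 := Nat.le_mul_of_pos_left _ hm
      have : wt m d = m * d 0 + d 1 := rfl
      omega
    apply hgt (d 0) hjd hd0w
    constructor
    · have : wt m d = m * d 0 + d 1 := rfl
      omega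
    · have h1 : w₀ - m * d 0 = d 1 := by
        have : wt m d = m * d 0 + d 1 := rfl
        omega
      rw [h1, fd_eta]
      exact hc
  -- now evaluate the coefficient at D = fd (j₁+1) n₁
  have hD := h (fd (j₁ + 1) n₁) (by simp)
  rw [coeff_mul_p] at hD
  simp only [fd_apply0, fd_apply1, Nat.add_sub_cancel] at hD
  rw [if_neg (by omega : ¬ (j₁ + 1) = 0)] at hD
  have hterm1 : (if m ≤ n₁ then (MvPowerSeries.coeff (fd (j₁ + 1) (n₁ - m))) q else 0)
      = 0 := by
    split_ifs with hms
    · apply hzero1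
      · simp only [wt, fd_apply0, fd_apply1]
        have : m * (j₁ + 1) = m * j₁ + m := by ring
        omega
      · simp
    · rfl
  rw [hterm1, zero_add] at hD
  rw [Finset.sum_eq_single_of_mem (fd j₁ n₁, (0 : Fin 2 →₀ ℕ))
    (by simp [Finset.HasAntidiagonal.mem_antidiagonal]) ?other] at hD
  · rw [coeff_zero_eq_constantCoeff_apply] at hD
    exact mul_ne_zero hPj₁.2 hα (by rwa [hn₁] at hD)
  · rintro ⟨u, v⟩ huv hne
    rw [Finset.HasAntidiagonal.mem_antidiagonal] at huv
    rcases eq_or_ne v 0 with rfl | hv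
    · rw [add_zero] at huv
      subst huv
      exact absurd rfl hne
    · have hwuv : wt m u + wt m v = w₀ := by
        rw [← wt_add, huv]
        simp only [wt, fd_apply0, fd_apply1]
        exact hmj
      have : wt m u < w₀ := by
        have := wt_pos m hm hv
        omega
      rw [hmin u this, zero_mul]

end Stmt4Aux

open Stmt4Aux

/-- Each formal branch `k⟦x,y⟧/(y^m + a·x)` (with `a` a unit, `m ≥ 1`) is a smooth formal
disk: the `k`-algebra homomorphism `k⟦t⟧ → k⟦x,y⟧/(y^m + a·x)` sending `t` to the class of
`y` (concretely, `Σ cₙ tⁿ ↦ Σ cₙ yⁿ mod (y^m + a·x)`, described coefficientwise by `ψ`) is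
bijective; in particular the quotient is an integral domain and `(y^m + a·x)` is prime. -/
theorem stmt_4 (k : Type*) [Field k] (m : ℕ) (hm : 1 ≤ m)
    (a : MvPowerSeries (Fin 2) k) (ha : IsUnit a)
    (I : Ideal (MvPowerSeries (Fin 2) k))
    (hI : I = Ideal.span
      {(X 1 : MvPowerSeries (Fin 2) k) ^ m + a * (X 0 : MvPowerSeries (Fin 2) k)})
    (ψ : PowerSeries k → MvPowerSeries (Fin 2) k)
    (hψ : ∀ (f : PowerSeries k) (d : Fin 2 →₀ ℕ),
      MvPowerSeries.coeff d (ψ f) = if d 0 = 0 then PowerSeries.coeff (d 1) f else 0) :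
    ∃ φ : PowerSeries k →ₐ[k] (MvPowerSeries (Fin 2) k ⧸ I),
      (∀ f, φ f = Ideal.Quotient.mk I (ψ f)) ∧ Function.Bijective φ
      ∧ IsDomain (MvPowerSeries (Fin 2) k ⧸ I) ∧ I.IsPrime := by
  classical
  have hm' : 0 < m := hm
  set α := constantCoeff a with hca
  have hα : α ≠ 0 := (isUnit_iff_constantCoeff.mp ha).ne_zero
  set b := a - C α with hb
  set p := (X 1 : MvPowerSeries (Fin 2) k) ^ m + a * (X 0 : MvPowerSeries (Fin 2) k) with hp
  -- ψ is a ring homomorphism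
  have ψadd : ∀ f g, ψ (f + g) = ψ f + ψ g := by
    intro f g
    apply MvPowerSeries.ext; intro d
    rw [map_add, hψ, hψ, hψ]
    split_ifs with h
    · rw [map_add]
    · rw [add_zero]
  have ψzero : ψ 0 = 0 := by
    apply MvPowerSeries.ext; intro d
    rw [hψ]
    simp
  have ψC : ∀ c : k, ψ (PowerSeries.C c) = C c := by
    intro c
    apply MvPowerSeries.ext; intro d
    rw [hψ, MvPowerSeries.coeff_C, PowerSeries.coeff_C]
    by_cases h0 : d 0 = 0 <;> by_cases h1 : d 1 = 0 <;>
      simp [Stmt4Aux.eq_zero_iff, h0, h1]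
  have ψone : ψ 1 = 1 := by
    rw [← map_one (PowerSeries.C (R := k)), ψC, map_one]
  have ψmul : ∀ f g, ψ (f * g) = ψ f * ψ g := by
    intro f g
    apply MvPowerSeries.ext; intro d
    rw [hψ, MvPowerSeries.coeff_mul]
    by_cases h0 : d 0 = 0
    · rw [if_pos h0, PowerSeries.coeff_mul]
      have hd : d = Finsupp.single 1 (d 1) := by
        conv_lhs => rw [← fd_eta d, h0]
        ext t; fin_cases t <;> simp [Stmt4Aux.fd]
      conv_rhs => rw [hd]
      rw [Finsupp.antidiagonal_single, Finset.sum_map]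
      apply Finset.sum_congr rfl
      rintro ⟨i, j⟩ hij
      simp only [Function.Embedding.coe_prodMap, Function.Embedding.coeFn_mk, Prod.map_apply]
      rw [hψ, hψ]
      simp [Finsupp.single_apply]
    · rw [if_neg h0]
      symm
      apply Finset.sum_eq_zero
      rintro ⟨u, v⟩ huv
      rw [Finset.HasAntidiagonal.mem_antidiagonal] at huv
      have huv0 : u 0 + v 0 = d 0 := by
        have := DFunLike.congr_fun huv 0; simpa using this
      rw [hψ, hψ]
      by_cases hu : u 0 = 0
      · rw [if_neg (by omega : ¬ v 0 = 0), mul_zero]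
      · rw [if_neg hu, zero_mul]
  -- the algebra homomorphism
  let φ : PowerSeries k →ₐ[k] (MvPowerSeries (Fin 2) k ⧸ I) :=
  { toFun := fun f => Ideal.Quotient.mk I (ψ f)
    map_one' := by
      show Ideal.Quotient.mk I (ψ 1) = 1
      rw [ψone, map_one]
    map_mul' := fun f g => by
      show Ideal.Quotient.mk I (ψ (f * g)) = Ideal.Quotient.mk I (ψ f) * Ideal.Quotient.mk I (ψ g)
      rw [ψmul, map_mul]
    map_zero' := by
      show Ideal.Quotient.mk I (ψ 0) = 0
      rw [ψzero, map_zero]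
    map_add' := fun f g => by
      show Ideal.Quotient.mk I (ψ (f + g)) = Ideal.Quotient.mk I (ψ f) + Ideal.Quotient.mk I (ψ g)
      rw [ψadd, map_add]
    commutes' := fun c => by
      show Ideal.Quotient.mk I (ψ ((algebraMap k (PowerSeries k)) c)) = _
      have h1 : (algebraMap k (PowerSeries k)) c = PowerSeries.C c := rfl
      rw [h1, ψC, c_eq_algebraMap]
      exact (Ideal.Quotient.mkₐ k I).commutes c }
  have hφ : ∀ f, φ f = Ideal.Quotient.mk I (ψ f) := fun f => rfl
  -- injectivity
  have hinj : Function.Injective φ := by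
    rw [injective_iff_map_eq_zero φ]
    intro f hf
    have hmem : ψ f ∈ I := Ideal.Quotient.eq_zero_iff_mem.mp hf
    rw [hI, Ideal.mem_span_singleton'] at hmem
    obtain ⟨q, hq⟩ := hmem
    have hq0 : q = 0 := key_inj m hm' a hα q (fun d hd => by rw [hq, hψ, if_neg hd])
    have hψf : ψ f = 0 := by rw [← hq, hq0, zero_mul]
    apply PowerSeries.ext; intro n
    have h2 : (MvPowerSeries.coeff (fd 0 n)) (ψ f) = 0 := by rw [hψf, map_zero]
    rw [hψ, if_pos (fd_apply0 0 n), fd_apply1] at h2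
    simpa using h2
  -- surjectivity
  have hsurj : Function.Surjective φ := by
    intro x
    obtain ⟨g, rfl⟩ := Ideal.Quotient.mk_surjective x
    refine ⟨ff m hm' α b g, ?_⟩
    rw [hφ, Ideal.Quotient.eq, hI, Ideal.mem_span_singleton']
    refine ⟨-(qq m hm' α b g), ?_⟩
    have hdiv : g - ψ (ff m hm' α b g) = qq m hm' α b g * p := by
      apply MvPowerSeries.ext; intro d
      rw [map_sub, hψ]
      have := division m hm' a g α hα hca.symm b hb d
      rw [hp]
      rw [this]
      ring
    rw [neg_mul, ← hdiv]
    ring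
  have hbij : Function.Bijective φ := ⟨hinj, hsurj⟩
  have hdom : IsDomain (MvPowerSeries (Fin 2) k ⧸ I) := by
    let e : (MvPowerSeries (Fin 2) k ⧸ I) ≃+* PowerSeries k :=
      (RingEquiv.ofBijective φ.toRingHom hbij).symm
    exact Function.Injective.isDomain e.toRingHom e.injective
  exact ⟨φ, hφ, hbij, hdom, (Ideal.Quotient.isDomain_iff_prime I).mp hdom⟩
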